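/- arXiv:1302.6071 — 2 statements merged into one kernel-verified Lean document; each statement's English description precedes it below -/
import Mathlib

section
/- Let A : ℤ × ℤ → G be a function into a group G (labelling of an apartment's vertices), and suppose A is (r,s)-periodic and (t,u)-periodic in the sense that A(i,j)⁻¹A(k,l) = A(i+r,j+s)⁻¹A(k+r,l+s) and similarly for (t,u), for all i,j,k,l, where (r,s) and (t,u) are linearly independent over ℚ. Then for every (i,j) ∈ ℤ² there exist m,n ∈ ℤ with mr+nt ≥ 0, ms+nu ≥ 0, i+mr+nt ≥ 0 and j+ms+nu ≥ 0; consequently A(i,j) = A(k,l)·A(k+mr+nt, l+ms+nu)⁻¹·A(i+mr+nt, j+ms+nu) for any k,l ≥ 0, so A is determined on all of ℤ² by its values on ℕ × ℕ. -/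
private lemma shift_iter {G : Type} [Group G] (A : ℤ × ℤ → G) (r s : ℤ)
    (h : ∀ i j k l : ℤ,
      (A (i, j))⁻¹ * A (k, l) = (A (i + r, j + s))⁻¹ * A (k + r, l + s)) :
    ∀ m : ℤ, ∀ i j k l : ℤ,
      (A (i, j))⁻¹ * A (k, l) = (A (i + m * r, j + m * s))⁻¹ * A (k + m * r, l + m * s) := by
  intro m
  induction m using Int.induction_on with
  | zero => simp
  | succ n ih =>
      intro i j k l
      have e1 : i + ((n : ℤ) + 1) * r = i + n * r + r := by ring
      have e2 : j + ((n : ℤ) + 1) * s = j + n * s + s := by ring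
      have e3 : k + ((n : ℤ) + 1) * r = k + n * r + r := by ring
      have e4 : l + ((n : ℤ) + 1) * s = l + n * s + s := by ring
      rw [e1, e2, e3, e4, ih i j k l, h (i + n * r) (j + n * s) (k + n * r) (l + n * s)]
  | pred n ih =>
      intro i j k l
      have key := h (i + (-(n : ℤ) - 1) * r) (j + (-(n : ℤ) - 1) * s)
        (k + (-(n : ℤ) - 1) * r) (l + (-(n : ℤ) - 1) * s)
      have e1 : i + (-(n : ℤ) - 1) * r + r = i + (-(n : ℤ)) * r := by ring
      have e2 : j + (-(n : ℤ) - 1) * s + s = j + (-(n : ℤ)) * s := by ring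
      have e3 : k + (-(n : ℤ) - 1) * r + r = k + (-(n : ℤ)) * r := by ring
      have e4 : l + (-(n : ℤ) - 1) * s + s = l + (-(n : ℤ)) * s := by ring
      rw [e1, e2, e3, e4] at key
      rw [ih i j k l, ← key]

private lemma shift_two {G : Type} [Group G] (A : ℤ × ℤ → G) (r s t u : ℤ)
    (hrs : ∀ i j k l : ℤ,
      (A (i, j))⁻¹ * A (k, l) = (A (i + r, j + s))⁻¹ * A (k + r, l + s))
    (htu : ∀ i j k l : ℤ,
      (A (i, j))⁻¹ * A (k, l) = (A (i + t, j + u))⁻¹ * A (k + t, l + u)) :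
    ∀ m n i j k l : ℤ,
      (A (i, j))⁻¹ * A (k, l) =
        (A (i + (m * r + n * t), j + (m * s + n * u)))⁻¹ *
          A (k + (m * r + n * t), l + (m * s + n * u)) := by
  intro m n i j k l
  rw [shift_iter A r s hrs m i j k l,
    shift_iter A t u htu n (i + m * r) (j + m * s) (k + m * r) (l + m * s)]
  simp only [add_assoc]

/-- A doubly periodic labelling of an apartment is determined by its values on a sector:
Case 1 of the rigidity lemma. -/
theorem doubly_periodic_determined_by_sector
    (G : Type) [Group G] (A : ℤ × ℤ → G) (r s t u : ℤ)
    (hrs : ∀ i j k l : ℤ,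
      (A (i, j))⁻¹ * A (k, l) = (A (i + r, j + s))⁻¹ * A (k + r, l + s))
    (htu : ∀ i j k l : ℤ,
      (A (i, j))⁻¹ * A (k, l) = (A (i + t, j + u))⁻¹ * A (k + t, l + u))
    (hindep : r * u - s * t ≠ 0) :
    ∀ i j : ℤ, ∃ m n : ℤ,
      0 ≤ m * r + n * t ∧ 0 ≤ m * s + n * u ∧
      0 ≤ i + (m * r + n * t) ∧ 0 ≤ j + (m * s + n * u) ∧
      ∀ k l : ℤ, 0 ≤ k → 0 ≤ l →
        A (i, j) = A (k, l) * (A (k + (m * r + n * t), l + (m * s + n * u)))⁻¹ *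
          A (i + (m * r + n * t), j + (m * s + n * u)) := by
  intro i j
  obtain ⟨e, he⟩ : ∃ e : ℤ, e * (r * u - s * t) = |r * u - s * t| := by
    rcases le_or_gt 0 (r * u - s * t) with h | h
    · exact ⟨1, by rw [abs_of_nonneg h]; ring⟩
    · exact ⟨-1, by rw [abs_of_neg h]; ring⟩
  set N : ℤ := max 0 (max (-i) (-j)) with hN
  have hN0 : 0 ≤ N := le_max_left _ _
  have habs : 1 ≤ |r * u - s * t| := Int.one_le_abs hindep
  have hNle : N ≤ N * |r * u - s * t| := le_mul_of_one_le_right hN0 habs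
  have hNi : -i ≤ N := le_trans (le_max_left _ _) (le_max_right _ _)
  have hNj : -j ≤ N := le_trans (le_max_right _ _) (le_max_right _ _)
  refine ⟨N * e * (u - t), N * e * (r - s), ?_, ?_, ?_, ?_, ?_⟩
  · have hP : N * e * (u - t) * r + N * e * (r - s) * t = N * |r * u - s * t| := by
      rw [← he]; ring
    rw [hP]; exact mul_nonneg hN0 (abs_nonneg _)
  · have hQ : N * e * (u - t) * s + N * e * (r - s) * u = N * |r * u - s * t| := by
      rw [← he]; ring
    rw [hQ]; exact mul_nonneg hN0 (abs_nonneg _)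
  · have hP : N * e * (u - t) * r + N * e * (r - s) * t = N * |r * u - s * t| := by
      rw [← he]; ring
    rw [hP]; linarith
  · have hQ : N * e * (u - t) * s + N * e * (r - s) * u = N * |r * u - s * t| := by
      rw [← he]; ring
    rw [hQ]; linarith
  · intro k l _ _
    have hcomb := shift_two A r s t u hrs htu (N * e * (u - t)) (N * e * (r - s)) k l i j
    have hstart : A (i, j) = A (k, l) * ((A (k, l))⁻¹ * A (i, j)) := by group
    rw [hstart, hcomb, ← mul_assoc]
end

section
/- Let A : ℤ × ℤ → G be a labelling that is (r,s)-periodic with r > 0 and s > 0 (i.e., A(i,j)⁻¹A(k,l) = A(i+r,j+s)⁻¹A(k+r,l+s) for all i,j,k,l). Then for every (i,j) ∈ ℤ², choosing m ∈ ℕ with i + mr ≥ 0 and j + ms ≥ 0, one has A(i,j) = A(k,l)·A(k+mr, l+ms)⁻¹·A(i+mr, j+ms) for all k,l ≥ 0; hence A is determined on ℤ² by its restriction to ℕ × ℕ. -/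
/-- A singly `(r,s)`-periodic labelling with `r, s > 0` is determined by its values on a
sector: Case 2 of the rigidity lemma. -/
theorem singly_periodic_determined_by_sector
    (G : Type) [Group G] (A : ℤ × ℤ → G) (r s : ℤ) (hr : 0 < r) (hs : 0 < s)
    (hrs : ∀ i j k l : ℤ,
      (A (i, j))⁻¹ * A (k, l) = (A (i + r, j + s))⁻¹ * A (k + r, l + s)) :
    ∀ i j : ℤ, ∀ m : ℕ, 0 ≤ i + (m : ℤ) * r → 0 ≤ j + (m : ℤ) * s →
      ∀ k l : ℤ, 0 ≤ k → 0 ≤ l →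
        A (i, j) = A (k, l) * (A (k + (m : ℤ) * r, l + (m : ℤ) * s))⁻¹ *
          A (i + (m : ℤ) * r, j + (m : ℤ) * s) := by
  have key : ∀ m : ℕ, ∀ i j k l : ℤ,
      (A (i, j))⁻¹ * A (k, l)
        = (A (i + (m : ℤ) * r, j + (m : ℤ) * s))⁻¹ * A (k + (m : ℤ) * r, l + (m : ℤ) * s) := by
    intro m
    induction m with
    | zero => intro i j k l; simp
    | succ n ih =>
      intro i j k l
      have h1 := ih i j k l
      have h2 := hrs (i + (n : ℤ) * r) (j + (n : ℤ) * s) (k + (n : ℤ) * r) (l + (n : ℤ) * s)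
      rw [h1, h2]
      push_cast
      ring_nf
  intro i j m _ _ k l _ _
  have h := key m k l i j
  have : A (k, l) * ((A (k, l))⁻¹ * A (i, j))
      = A (k, l) * ((A (k + (m : ℤ) * r, l + (m : ℤ) * s))⁻¹
        * A (i + (m : ℤ) * r, j + (m : ℤ) * s)) := by rw [h]
  simpa [mul_assoc] using this
end
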